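/- For the 4×4 matrix A with rows (0,1,1,1), (1,0,1,1), (1,1,0,1), (1,1,1,0) (the all-ones matrix minus identity) and tree dimension k = 2: there are no degree-1 relations (A_i ≤ A_j fails entrywise for all i ≠ j), yet i ⇒_2 j holds for all i, j ∈ D; in particular A ∈ P(2,2). -/

import Mathlib

/-- A labeling of the `k`-tree (vertices = words over `Fin k`) is valid up to depth `n`
with respect to the 0,1 transition matrix `A` if every edge from depth `< n` is allowed. -/
def ValidUpTo {d k : ℕ} (A : Matrix (Fin d) (Fin d) ℕ) (n : ℕ)
    (lab : List (Fin k) → Fin d) : Prop :=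
  ∀ x : List (Fin k), x.length < n → ∀ g : Fin k, A (lab x) (lab (x ++ [g])) = 1

/-- The arrival set `𝒜(i, ε, L_n)`: restrictions to level `n` of valid labelings
of the height-`n` `k`-tree with root label `i`. -/
def Arrival {d : ℕ} (k : ℕ) (A : Matrix (Fin d) (Fin d) ℕ) (n : ℕ) (i : Fin d) :
    Set ({w : List (Fin k) // w.length = n} → Fin d) :=
  {ξ | ∃ lab : List (Fin k) → Fin d, ValidUpTo A n lab ∧ lab [] = i ∧
    ∀ w : {w : List (Fin k) // w.length = n}, ξ w = lab w.1}

/-- `A ∈ P(k,n)`: all arrival sets at level `n` coincide. -/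
def memP {d : ℕ} (k : ℕ) (A : Matrix (Fin d) (Fin d) ℕ) (n : ℕ) : Prop :=
  ∀ i j : Fin d, Arrival k A n i = Arrival k A n j

/-- `A ∈ P*(k,n)`: every arrival set at level `n` is everything. -/
def memPStar {d : ℕ} (k : ℕ) (A : Matrix (Fin d) (Fin d) ℕ) (n : ℕ) : Prop :=
  ∀ i : Fin d, Arrival k A n i = Set.univ

/-- `i ⇒_n j` : every level-`n` configuration achievable from root `i` is achievable from root `j`. -/
def Repl {d : ℕ} (k : ℕ) (A : Matrix (Fin d) (Fin d) ℕ) (n : ℕ) (i j : Fin d) : Prop :=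
  Arrival k A n i ⊆ Arrival k A n j

def Amat : Matrix (Fin 4) (Fin 4) ℕ :=
  !![0, 1, 1, 1; 1, 0, 1, 1; 1, 1, 0, 1; 1, 1, 1, 0]

/-- pick an element of `Fin 4` distinct from `a`, `b`, `c`. -/
def pick (a b c : Fin 4) : Fin 4 :=
  if 0 ≠ a ∧ 0 ≠ b ∧ 0 ≠ c then 0
  else if 1 ≠ a ∧ 1 ≠ b ∧ 1 ≠ c then 1
  else if 2 ≠ a ∧ 2 ≠ b ∧ 2 ≠ c then 2
  else 3

lemma pick_ne : ∀ a b c : Fin 4,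
    pick a b c ≠ a ∧ pick a b c ≠ b ∧ pick a b c ≠ c := by decide

lemma Amat_ne : ∀ a b : Fin 4, a ≠ b → Amat a b = 1 := by
  intro a b h; fin_cases a <;> fin_cases b <;> simp_all [Amat]

def mylab (i : Fin 4) (ξ : {w : List (Fin 2) // w.length = 2} → Fin 4) :
    List (Fin 2) → Fin 4
  | [] => i
  | [g] => pick i (ξ ⟨[g, 0], rfl⟩) (ξ ⟨[g, 1], rfl⟩)
  | g :: h :: _ => ξ ⟨[g, h], rfl⟩

lemma arrival_univ (i : Fin 4) : Arrival 2 Amat 2 i = Set.univ := by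
  ext ξ
  simp only [Set.mem_univ, iff_true]
  refine ⟨mylab i ξ, ?_, rfl, ?_⟩
  · intro x hx g
    match x, hx with
    | [], _ =>
      exact Amat_ne _ _ (pick_ne i (ξ ⟨[g, 0], rfl⟩) (ξ ⟨[g, 1], rfl⟩)).1.symm
    | [g'], _ =>
      have hp := pick_ne i (ξ ⟨[g', 0], rfl⟩) (ξ ⟨[g', 1], rfl⟩)
      fin_cases g
      · exact Amat_ne _ _ hp.2.1
      · exact Amat_ne _ _ hp.2.2
    | g' :: h' :: t, hx => exact absurd hx (by simp)
  · rintro ⟨w, hw⟩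
    match w, hw with
    | [g, h], _ => rfl

theorem stmt16 :
    let A : Matrix (Fin 4) (Fin 4) ℕ :=
      !![0, 1, 1, 1; 1, 0, 1, 1; 1, 1, 0, 1; 1, 1, 1, 0]
    (∀ i j : Fin 4, i ≠ j → ¬ ∀ c, A i c ≤ A j c) ∧
    (∀ i j : Fin 4, Repl 2 A 2 i j) ∧ memP 2 A 2 := by
  intro A
  refine ⟨?_, ?_, ?_⟩
  · intro i j h hc; have := hc j; fin_cases i <;> fin_cases j <;> simp_all [A]
  · intro i j
    show Arrival 2 Amat 2 i ⊆ Arrival 2 Amat 2 j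
    rw [arrival_univ, arrival_univ]
  · intro i j
    show Arrival 2 Amat 2 i = Arrival 2 Amat 2 j
    rw [arrival_univ, arrival_univ]
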